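/- Let α be a nonzero real number and d ≥ 1 an integer. Then the limit lim_{β→0⁺} ∫_{ℝ^d} exp(−(β − iα)·‖x‖²) dx exists and equals (iπ/α)^{d/2}, where ‖·‖ is the Euclidean norm on ℝ^d, the integral for β > 0 is an absolutely convergent Lebesgue integral, and w^{d/2} denotes the principal branch of the complex power. -/
import Mathlib

open MeasureTheory

lemma aux_integrable (α : ℝ) (d : ℕ) (β : ℝ) (hβ : 0 < β) :
    Integrable (fun x : EuclideanSpace ℝ (Fin d) =>
        Complex.exp (-((β : ℂ) - Complex.I * (α : ℂ)) * ((‖x‖ ^ 2 : ℝ) : ℂ))) := by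
  have hre : 0 < ((β : ℂ) - Complex.I * (α : ℂ)).re := by simp [hβ]
  have := GaussianFourier.integrable_cexp_neg_mul_sq_norm_add
    (V := EuclideanSpace ℝ (Fin d)) hre 0 0
  apply this.congr
  filter_upwards with x
  push_cast
  ring_nf

lemma aux_value (α : ℝ) (d : ℕ) (β : ℝ) (hβ : 0 < β) :
    (∫ x : EuclideanSpace ℝ (Fin d),
        Complex.exp (-((β : ℂ) - Complex.I * (α : ℂ)) * ((‖x‖ ^ 2 : ℝ) : ℂ)))
      = ((Real.pi : ℂ) / ((β : ℂ) - Complex.I * (α : ℂ))) ^ ((d : ℂ) / 2) := by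
  have hre : 0 < ((β : ℂ) - Complex.I * (α : ℂ)).re := by simp [hβ]
  have := GaussianFourier.integral_cexp_neg_mul_sq_norm (V := EuclideanSpace ℝ (Fin d)) hre
  rw [finrank_euclideanSpace_fin] at this
  rw [← this]
  congr 1 with x
  push_cast
  ring_nf

theorem regularized_fresnel_integral
    (α : ℝ) (hα : α ≠ 0) (d : ℕ) (hd : 1 ≤ d) :
    (∀ β : ℝ, 0 < β →
      Integrable (fun x : EuclideanSpace ℝ (Fin d) =>
        Complex.exp (-((β : ℂ) - Complex.I * (α : ℂ)) * ((‖x‖ ^ 2 : ℝ) : ℂ))))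
    ∧ Filter.Tendsto
        (fun β : ℝ => ∫ x : EuclideanSpace ℝ (Fin d),
          Complex.exp (-((β : ℂ) - Complex.I * (α : ℂ)) * ((‖x‖ ^ 2 : ℝ) : ℂ)))
        (nhdsWithin 0 (Set.Ioi 0))
        (nhds ((Complex.I * (Real.pi : ℂ) / (α : ℂ)) ^ ((d : ℂ) / 2))) := by
  refine ⟨fun β hβ => aux_integrable α d β hβ, ?_⟩
  have hαc : (α : ℂ) ≠ 0 := by exact_mod_cast hα
  have hz0 : ((Real.pi : ℂ) / ((0 : ℂ) - Complex.I * (α : ℂ)))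
      = Complex.I * (Real.pi : ℂ) / (α : ℂ) := by
    rw [zero_sub, div_eq_div_iff (by simp [Complex.I_ne_zero, hαc]) hαc]
    ring_nf
    simp [Complex.I_sq]
  have hbase : Filter.Tendsto (fun β : ℝ => (Real.pi : ℂ) / ((β : ℂ) - Complex.I * (α : ℂ)))
      (nhdsWithin 0 (Set.Ioi 0)) (nhds (Complex.I * (Real.pi : ℂ) / (α : ℂ))) := by
    rw [← hz0]
    apply Filter.Tendsto.mono_left _ nhdsWithin_le_nhds
    apply Filter.Tendsto.div tendsto_const_nhds
    · exact ((Complex.continuous_ofReal.tendsto 0).sub tendsto_const_nhds)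
    · simp [Complex.I_ne_zero, hαc, sub_eq_zero, Complex.ext_iff, hα]
  have him : (Complex.I * (Real.pi : ℂ) / (α : ℂ)).im = Real.pi / α := by
    simp [Complex.div_im, Complex.div_re]
    rw [mul_div_mul_right _ _ hα]
  have hcont : ContinuousAt (fun z : ℂ => z ^ ((d : ℂ) / 2))
      (Complex.I * (Real.pi : ℂ) / (α : ℂ)) := by
    apply continuousAt_cpow_const
    rw [Complex.mem_slitPlane_iff]
    right
    rw [him]
    exact div_ne_zero Real.pi_ne_zero hα
  have := hcont.tendsto.comp hbase
  apply this.congr'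
  filter_upwards [self_mem_nhdsWithin] with β hβ
  exact (aux_value α d β hβ).symm
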